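/- arXiv:2309.00337 — 7 statements merged into one kernel-verified Lean document; each statement's English description precedes it below -/
import Mathlib

section
/- Let F : J ⥤ Cat and let (i, a) and (i′, a′) be pairs (with a ∈ F(i), a′ ∈ F(i′)) that are connected by an identity-decorated zig-zag, i.e., a zig-zag in the category of elements of Ob ∘ F. Then the trivial zig-zag at i decorated by id_a and the trivial zig-zag at i′ decorated by id_{a′} are related under the equivalence relation ≈ on F-decorated zig-zags. -/
open CategoryTheory

universe u

namespace ZigZagColimit

variable {J : Type u} [Category.{u} J]

/-- An `F`-decorated zig-zag from `(i, a)` to `(j, b)`: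
either a decoration of the trivial zig-zag at `i` (a single morphism `a ⟶ b` in `F.obj i`),
or a roof `l : j₁ ⟶ i`, `r : j₁ ⟶ i₁` together with a middle object `a₁ : F.obj j₁`,
a decorating morphism `f : a ⟶ (F.map l).toFunctor.obj a₁` and a decorated zig-zag continuing from
`(i₁, (F.map r).toFunctor.obj a₁)`. -/
inductive DecZig (F : J ⥤ Cat.{u, u}) : ∀ (i : J), F.obj i → ∀ (j : J), F.obj j → Type u
  | triv {i : J} {a b : F.obj i} (f : a ⟶ b) : DecZig F i a i b
  | cons {i j₁ i₁ j : J} {a : F.obj i} {a₁ : F.obj j₁} {b : F.obj j}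
      (l : j₁ ⟶ i) (r : j₁ ⟶ i₁) (f : a ⟶ (F.map l).toFunctor.obj a₁)
      (rest : DecZig F i₁ ((F.map r).toFunctor.obj a₁) j b) : DecZig F i a j b

/-- Concatenation of decorated zig-zags: concatenate the underlying zig-zags, composing
the two adjacent decorating morphisms at the junction. -/
def DecZig.comp {F : J ⥤ Cat.{u, u}} :
    ∀ {i j k : J} {a : F.obj i} {b : F.obj j} {c : F.obj k},
      DecZig F i a j b → DecZig F j b k c → DecZig F i a k c
  | _, _, _, _, _, _, .triv f, .triv g => .triv (f ≫ g)
  | _, _, _, _, _, _, .triv f, .cons l r g rest => .cons l r (f ≫ g) rest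
  | _, _, _, _, _, _, .cons l r f rest, E => .cons l r f (rest.comp E)

/-- A decorated zig-zag is identity-decorated if all decorating morphisms are
(identities, i.e.) `eqToHom`s of the forced equalities of objects. -/
inductive DecZig.IsId (F : J ⥤ Cat.{u, u}) :
    ∀ {i : J} {a : F.obj i} {j : J} {b : F.obj j}, DecZig F i a j b → Prop
  | triv {i : J} {a b : F.obj i} (h : a = b) : DecZig.IsId F (.triv (eqToHom h))
  | cons {i j₁ i₁ j : J} {a : F.obj i} {a₁ : F.obj j₁} {b : F.obj j}
      (l : j₁ ⟶ i) (r : j₁ ⟶ i₁) (h : a = (F.map l).toFunctor.obj a₁)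
      {rest : DecZig F i₁ ((F.map r).toFunctor.obj a₁) j b} (hr : DecZig.IsId F rest) :
      DecZig.IsId F (.cons l r (eqToHom h) rest)

/-- 2-cells of the zig-zag double category `ℤF`, lying over vertical boundary morphisms
`ρi : i ⟶ i'` and `ρj : j ⟶ j'` in `J`.  They are generated by horizontal concatenation of
the two generating cell types: squares (collapsing a roof onto an object, composing the two
decorating morphisms) and roof morphisms (mapping a roof to a roof). -/
inductive Cell (F : J ⥤ Cat.{u, u}) :
    ∀ {i j i' j' : J} (ρi : i ⟶ i') (ρj : j ⟶ j') {a : F.obj i} {b : F.obj j},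
      DecZig F i a j b → DecZig F i' ((F.map ρi).toFunctor.obj a) j' ((F.map ρj).toFunctor.obj b) → Prop
  | triv {i k : J} (ρ : i ⟶ k) {a b : F.obj i} (f : a ⟶ b) :
      Cell F ρ ρ (.triv f) (.triv ((F.map ρ).toFunctor.map f))
  | squareCons {i i₁ k j₁ j j' : J} (l : j₁ ⟶ i) (r : j₁ ⟶ i₁) (ρi : i ⟶ k) (ρ₁ : i₁ ⟶ k)
      (w : l ≫ ρi = r ≫ ρ₁)
      {a : F.obj i} {a₁ : F.obj j₁} {b : F.obj j}
      (f₀ : a ⟶ (F.map l).toFunctor.obj a₁)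
      (h1 : (F.map ρi).toFunctor.obj ((F.map l).toFunctor.obj a₁) = (F.map ρ₁).toFunctor.obj ((F.map r).toFunctor.obj a₁))
      {ρj : j ⟶ j'}
      {rest : DecZig F i₁ ((F.map r).toFunctor.obj a₁) j b}
      {rest' : DecZig F k ((F.map ρ₁).toFunctor.obj ((F.map r).toFunctor.obj a₁)) j' ((F.map ρj).toFunctor.obj b)}
      (hc : Cell F ρ₁ ρj rest rest') :
      Cell F ρi ρj (.cons l r f₀ rest)
        (DecZig.comp (.triv ((F.map ρi).toFunctor.map f₀ ≫ eqToHom h1)) rest')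
  | roofCons {i i' i₁ i₁' j₁ j₁' j j' : J} (l : j₁ ⟶ i) (r : j₁ ⟶ i₁)
      (l' : j₁' ⟶ i') (r' : j₁' ⟶ i₁')
      (ρi : i ⟶ i') (ρ₁ : i₁ ⟶ i₁') (ρt : j₁ ⟶ j₁')
      (wl : l ≫ ρi = ρt ≫ l') (wr : r ≫ ρ₁ = ρt ≫ r')
      {a : F.obj i} {a₁ : F.obj j₁} {b : F.obj j}
      (f₀ : a ⟶ (F.map l).toFunctor.obj a₁)
      (h1 : (F.map ρi).toFunctor.obj ((F.map l).toFunctor.obj a₁) = (F.map l').toFunctor.obj ((F.map ρt).toFunctor.obj a₁))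
      (h2 : (F.map r').toFunctor.obj ((F.map ρt).toFunctor.obj a₁) = (F.map ρ₁).toFunctor.obj ((F.map r).toFunctor.obj a₁))
      {ρj : j ⟶ j'}
      {rest : DecZig F i₁ ((F.map r).toFunctor.obj a₁) j b}
      {rest' : DecZig F i₁' ((F.map ρ₁).toFunctor.obj ((F.map r).toFunctor.obj a₁)) j' ((F.map ρj).toFunctor.obj b)}
      (hc : Cell F ρ₁ ρj rest rest') :
      Cell F ρi ρj (.cons l r f₀ rest)
        (.cons l' r' ((F.map ρi).toFunctor.map f₀ ≫ eqToHom h1)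
          (DecZig.comp (.triv (eqToHom h2)) rest'))

/-- Bundled decorated zig-zags. -/
structure DecZ (F : J ⥤ Cat.{u, u}) : Type u where
  {i : J}
  {j : J}
  {a : F.obj i}
  {b : F.obj j}
  z : DecZig F i a j b

/-- The one-step relation on decorated zig-zags given by the 2-cells of `ℤF`. -/
def CellRel (F : J ⥤ Cat.{u, u}) (D D' : DecZ F) : Prop :=
  ∃ (ρi : D.i ⟶ D'.i) (ρj : D.j ⟶ D'.j)
    (z' : DecZig F D'.i ((F.map ρi).toFunctor.obj D.a) D'.j ((F.map ρj).toFunctor.obj D.b)),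
    Cell F ρi ρj D.z z' ∧ D' = DecZ.mk z'

/-- The equivalence relation `≈` on decorated zig-zags generated by the 2-cells of `ℤF`. -/
def Eqv (F : J ⥤ Cat.{u, u}) : DecZ F → DecZ F → Prop :=
  Relation.EqvGen (CellRel F)

/-- Pairs `(i, a)` with `a` an object of `F.obj i`. -/
structure ObjPair (F : J ⥤ Cat.{u, u}) : Type u where
  i : J
  a : F.obj i

/-- The basic relation on pairs: `(i, a) ∼ (j, (F.map u).toFunctor.obj a)` for `u : i ⟶ j`. -/
def ObjRel (F : J ⥤ Cat.{u, u}) (x y : ObjPair F) : Prop :=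
  ∃ u : x.i ⟶ y.i, (F.map u).toFunctor.obj x.a = y.a

lemma decz_triv_eqToHom (F : J ⥤ Cat.{u, u}) {i : J} {x y : F.obj i} (h : x = y) :
    (⟨DecZig.triv (eqToHom h)⟩ : DecZ F) = ⟨DecZig.triv (𝟙 x)⟩ := by
  subst h; rfl

lemma decz_triv_congr (F : J ⥤ Cat.{u, u}) {i : J} {x y : F.obj i} (h : x = y) :
    (⟨DecZig.triv (𝟙 x)⟩ : DecZ F) = ⟨DecZig.triv (𝟙 y)⟩ := by
  subst h; rfl

lemma decz_triv_of_eqToHom (F : J ⥤ Cat.{u, u}) {i : J} {x y : F.obj i}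
    (g : x ⟶ y) (h : x = y) (hg : g = eqToHom h) :
    (⟨DecZig.triv g⟩ : DecZ F) = ⟨DecZig.triv (𝟙 x)⟩ := by
  subst hg; exact decz_triv_eqToHom F h

/-- Key lemma: `(i, (F.map l).toFunctor.obj a₁)` and `(j₁, a₁)` give `≈`-related trivially
decorated zig-zags, for any `l : j₁ ⟶ i`. -/
lemma triv_id_eqv_of_leg (F : J ⥤ Cat.{u, u}) {j₁ i : J} (l : j₁ ⟶ i) (a₁ : F.obj j₁) :
    Eqv F ⟨DecZig.triv (𝟙 ((F.map l).toFunctor.obj a₁))⟩ ⟨DecZig.triv (𝟙 a₁)⟩ := by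
  have h₀ : a₁ = (F.map (𝟙 j₁)).toFunctor.obj a₁ := by simp
  -- the zig-zag `(𝟙, 𝟙)` at `j₁` decorated by identities
  let W₀ : DecZig F j₁ a₁ j₁ ((F.map (𝟙 j₁)).toFunctor.obj a₁) :=
    .cons (𝟙 j₁) (𝟙 j₁) (eqToHom h₀) (.triv (𝟙 ((F.map (𝟙 j₁)).toFunctor.obj a₁)))
  -- collapse `W₀` to a trivial zig-zag at `j₁`
  let Z₁ : DecZig F j₁ ((F.map (𝟙 j₁)).toFunctor.obj a₁) j₁
      ((F.map (𝟙 j₁)).toFunctor.obj ((F.map (𝟙 j₁)).toFunctor.obj a₁)) :=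
    .triv ((F.map (𝟙 j₁)).toFunctor.map (eqToHom h₀))
  have r1 : CellRel F ⟨W₀⟩ ⟨Z₁⟩ :=
    ⟨𝟙 j₁, 𝟙 j₁, _, Cell.squareCons (𝟙 j₁) (𝟙 j₁) (𝟙 j₁) (𝟙 j₁) rfl (eqToHom h₀) rfl
      (Cell.triv (𝟙 j₁) (𝟙 ((F.map (𝟙 j₁)).toFunctor.obj a₁))), by simp [DecZig.comp, Z₁]⟩
  -- map the roof `(𝟙, 𝟙)` to the roof `(l, 𝟙)` via the roof morphism `𝟙 j₁`
  let W' : DecZig F i ((F.map l).toFunctor.obj a₁) j₁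
      ((F.map (𝟙 j₁)).toFunctor.obj ((F.map (𝟙 j₁)).toFunctor.obj a₁)) :=
    .cons l (𝟙 j₁) ((F.map l).toFunctor.map (eqToHom h₀))
      (.triv (𝟙 ((F.map (𝟙 j₁)).toFunctor.obj ((F.map (𝟙 j₁)).toFunctor.obj a₁))))
  have r2 : CellRel F ⟨W₀⟩ ⟨W'⟩ :=
    ⟨l, 𝟙 j₁, _, Cell.roofCons (𝟙 j₁) (𝟙 j₁) l (𝟙 j₁) l (𝟙 j₁) (𝟙 j₁) (by simp) (by simp)
      (eqToHom h₀) rfl rfl (Cell.triv (𝟙 j₁) (𝟙 ((F.map (𝟙 j₁)).toFunctor.obj a₁))), by simp [DecZig.comp, W']⟩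
  -- collapse `W'` to a trivial zig-zag at `i`
  have h1c : (F.map (𝟙 i)).toFunctor.obj ((F.map l).toFunctor.obj ((F.map (𝟙 j₁)).toFunctor.obj a₁)) =
      (F.map l).toFunctor.obj ((F.map (𝟙 j₁)).toFunctor.obj ((F.map (𝟙 j₁)).toFunctor.obj a₁)) := by simp
  let Z₃ : DecZig F i ((F.map (𝟙 i)).toFunctor.obj ((F.map l).toFunctor.obj a₁)) i
      ((F.map l).toFunctor.obj ((F.map (𝟙 j₁)).toFunctor.obj ((F.map (𝟙 j₁)).toFunctor.obj a₁))) :=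
    .triv ((F.map (𝟙 i)).toFunctor.map ((F.map l).toFunctor.map (eqToHom h₀)) ≫ eqToHom h1c)
  have r3 : CellRel F ⟨W'⟩ ⟨Z₃⟩ :=
    ⟨𝟙 i, l, _, Cell.squareCons l (𝟙 j₁) (𝟙 i) l (by simp)
      ((F.map l).toFunctor.map (eqToHom h₀)) h1c
      (Cell.triv l (𝟙 ((F.map (𝟙 j₁)).toFunctor.obj ((F.map (𝟙 j₁)).toFunctor.obj a₁)))), by simp [DecZig.comp, Z₃]⟩
  -- identify the trivial endpoints
  have e1 : (⟨Z₁⟩ : DecZ F) = ⟨DecZig.triv (𝟙 a₁)⟩ := by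
    rw [decz_triv_of_eqToHom F _ (by simp) (by simp [Z₁, eqToHom_map])]
    exact decz_triv_congr F (by simp)
  have e3 : (⟨Z₃⟩ : DecZ F) = ⟨DecZig.triv (𝟙 ((F.map l).toFunctor.obj a₁))⟩ := by
    rw [decz_triv_of_eqToHom F _ (by simp) (by simp [Z₃, eqToHom_map])]
    exact decz_triv_congr F (by simp)
  rw [← e3, ← e1]
  exact Relation.EqvGen.trans _ _ _
    (Relation.EqvGen.trans _ _ _
      (Relation.EqvGen.symm _ _ (Relation.EqvGen.rel _ _ r3))
      (Relation.EqvGen.symm _ _ (Relation.EqvGen.rel _ _ r2)))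
    (Relation.EqvGen.rel _ _ r1)

/-- If `(i, a)` and `(i′, a′)` are connected by an identity-decorated
zig-zag, then the trivial zig-zag at `i` decorated by `𝟙 a` and the trivial zig-zag at `i′`
decorated by `𝟙 a′` are related under `≈`. -/
theorem trivial_ids_eqv_of_idDecorated_zigzag
    {J : Type u} [Category.{u} J] (F : J ⥤ Cat.{u, u})
    {i i' : J} {a : F.obj i} {a' : F.obj i'}
    (E : DecZig F i a i' a') (hE : DecZig.IsId F E) :
    Eqv F ⟨DecZig.triv (𝟙 a)⟩ ⟨DecZig.triv (𝟙 a')⟩ := by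
  induction hE with
  | triv h => subst h; exact Relation.EqvGen.refl _
  | @cons i j₁ i₁ j a a₁ b l r h rest hrest ih =>
    subst h
    exact Relation.EqvGen.trans _ _ _
      (Relation.EqvGen.trans _ _ _ (triv_id_eqv_of_leg F l a₁)
        (Relation.EqvGen.symm _ _ (triv_id_eqv_of_leg F r a₁))) ih

end ZigZagColimit
end

section
/- Let F : J ⥤ Cat. Every identity-decorated zig-zag (i, a) ⇝ (i′, a′) (a zig-zag in the category of elements of Ob ∘ F, decorated by identity morphisms) is related, under the equivalence relation ≈ on F-decorated zig-zags, to the trivial zig-zag at i′ decorated by id_{a′}. -/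
open CategoryTheory

universe u

namespace ZigZagColimit

variable {J : Type u} [Category.{u} J]

/-- The sequence of roofs (with their middle objects) underlying a decorated zig-zag. -/
inductive Roofs (F : J ⥤ Cat.{u, u}) : J → J → Type u
  | nil (i : J) : Roofs F i i
  | cons {i j₁ i₁ j : J} (l : j₁ ⟶ i) (r : j₁ ⟶ i₁) (a₁ : F.obj j₁)
      (rest : Roofs F i₁ j) : Roofs F i j

/-- Extract the underlying roofs of a decorated zig-zag. -/
def DecZig.roofs {F : J ⥤ Cat.{u, u}} :
    ∀ {i j : J} {a : F.obj i} {b : F.obj j}, DecZig F i a j b → Roofs F i j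
  | _, _, _, _, .triv _ => .nil _
  | _, _, _, _, .cons (a₁ := a₁) l r _ rest => .cons l r a₁ rest.roofs

@[simp] lemma roofs_triv {F : J ⥤ Cat.{u, u}} {i : J} {a b : F.obj i} (f : a ⟶ b) :
    (DecZig.triv (F := F) f).roofs = .nil i := by simp [DecZig.roofs]

@[simp] lemma roofs_cons {F : J ⥤ Cat.{u, u}} {i j₁ i₁ j : J} {a : F.obj i}
    {a₁ : F.obj j₁} {b : F.obj j} (l : j₁ ⟶ i) (r : j₁ ⟶ i₁) (f : a ⟶ (F.map l).toFunctor.obj a₁)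
    (rest : DecZig F i₁ ((F.map r).toFunctor.obj a₁) j b) :
    (DecZig.cons l r f rest).roofs = .cons l r a₁ rest.roofs := by simp [DecZig.roofs]

@[simp] lemma comp_triv_triv {F : J ⥤ Cat.{u, u}} {i : J} {a b c : F.obj i}
    (g : a ⟶ b) (f : b ⟶ c) :
    DecZig.comp (F := F) (.triv g) (.triv f) = .triv (g ≫ f) := by simp [DecZig.comp]

@[simp] lemma comp_triv_cons {F : J ⥤ Cat.{u, u}} {i j₁ i₁ j : J} {a b : F.obj i}
    {a₁ : F.obj j₁} {c : F.obj j} (g : a ⟶ b) (l : j₁ ⟶ i) (r : j₁ ⟶ i₁)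
    (f : b ⟶ (F.map l).toFunctor.obj a₁) (rest : DecZig F i₁ ((F.map r).toFunctor.obj a₁) j c) :
    DecZig.comp (F := F) (.triv g) (.cons l r f rest) = .cons l r (g ≫ f) rest := by
  simp [DecZig.comp]

lemma roofs_comp_triv {F : J ⥤ Cat.{u, u}} {i j : J} {a b : F.obj i} {c : F.obj j}
    (g : a ⟶ b) (Z : DecZig F i b j c) :
    (DecZig.comp (.triv g) Z).roofs = Z.roofs := by
  cases Z <;> simp

lemma isId_triv' {F : J ⥤ Cat.{u, u}} {i : J} {a b : F.obj i}
    (f : a ⟶ b) (h : a = b) (hf : f = eqToHom h) : DecZig.IsId F (.triv f) := by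
  subst hf; exact .triv h

lemma isId_cons' {F : J ⥤ Cat.{u, u}} {i j₁ i₁ j : J} {a : F.obj i} {a₁ : F.obj j₁}
    {b : F.obj j} (l : j₁ ⟶ i) (r : j₁ ⟶ i₁) (f : a ⟶ (F.map l).toFunctor.obj a₁)
    (h : a = (F.map l).toFunctor.obj a₁) (hf : f = eqToHom h)
    {rest : DecZig F i₁ ((F.map r).toFunctor.obj a₁) j b} (hr : DecZig.IsId F rest) :
    DecZig.IsId F (.cons l r f rest) := by
  subst hf; exact .cons l r h hr

lemma isId_comp_triv {F : J ⥤ Cat.{u, u}} {i j : J} {c a : F.obj i} {b : F.obj j}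
    (g : c ⟶ a) (hg' : c = a) (hg : g = eqToHom hg') {Z : DecZig F i a j b}
    (hZ : DecZig.IsId F Z) : DecZig.IsId F (DecZig.comp (.triv g) Z) := by
  cases hZ with
  | triv h =>
      rw [comp_triv_triv]
      exact isId_triv' _ (hg'.trans h) (by rw [hg]; simp)
  | cons l r h hr =>
      rw [comp_triv_cons]
      exact isId_cons' _ _ _ (hg'.trans h) (by rw [hg]; simp) hr

/-- Any identity-decorated zig-zag admits an identity-boundaried cell to an
identity-decorated zig-zag with the same roofs. -/
lemma exists_idCell {F : J ⥤ Cat.{u, u}} {i j : J} {a : F.obj i} {b : F.obj j}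
    {Z : DecZig F i a j b} (hZ : DecZig.IsId F Z) :
    ∃ Z' : DecZig F i ((F.map (𝟙 i)).toFunctor.obj a) j ((F.map (𝟙 j)).toFunctor.obj b),
      Cell F (𝟙 i) (𝟙 j) Z Z' ∧ DecZig.IsId F Z' ∧ Z'.roofs = Z.roofs := by
  induction hZ with
  | triv h =>
      exact ⟨_, Cell.triv (𝟙 _) (eqToHom h),
        isId_triv' _ (by rw [h]) (by simp [eqToHom_map]), by simp⟩
  | cons l r h hr IH =>
      obtain ⟨R', cR, hR, hroofs⟩ := IH
      refine ⟨_, Cell.roofCons l r l r (𝟙 _) (𝟙 _) (𝟙 _) (by simp) (by simp)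
        (eqToHom h) (by simp) (by simp) cR, ?_, ?_⟩
      · exact isId_cons' _ _ _ (by simp [h]) (by simp [eqToHom_map])
          (isId_comp_triv _ (by simp) rfl hR)
      · rw [roofs_cons, roofs_cons, roofs_comp_triv, hroofs]
        congr 1
        simp

/-- Two identity-decorated zig-zags with the same endpoints-in-`J`, the same source
object and the same roofs are equal as bundled decorated zig-zags. -/
lemma isId_ext {F : J ⥤ Cat.{u, u}} {i j : J} {a a₂ : F.obj i} {b b₂ : F.obj j}
    {Z : DecZig F i a j b} {Z' : DecZig F i a₂ j b₂}
    (hZ : DecZig.IsId F Z) (hZ' : DecZig.IsId F Z') (ha : a = a₂)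
    (hr : Z.roofs = Z'.roofs) : DecZ.mk Z = DecZ.mk Z' := by
  induction hZ with
  | triv h =>
      cases hZ' with
      | triv h' => subst ha; subst h; subst h'; rfl
      | cons l' r' h' hr' => simp at hr
  | cons l r h hrest IH =>
      cases hZ' with
      | triv h' => simp at hr
      | cons l' r' h' hrest' =>
          simp only [roofs_cons] at hr
          injection hr with e1 e2 e3 e4 e5 e6 e7 e8
          subst e2; subst e3
          obtain rfl := eq_of_heq e5
          obtain rfl := eq_of_heq e6
          obtain rfl := eq_of_heq e7
          subst ha
          have hmk := IH hrest' rfl (eq_of_heq e8)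
          injection hmk with f1 f2 f3 f4 f5
          obtain rfl := f4
          obtain rfl := eq_of_heq f5
          rfl

/-- Every identity-decorated zig-zag `(i, a) ⇝ (i′, a′)` is related under
`≈` to the trivial zig-zag at `i′` decorated by the identity of `a′`. -/
theorem idDecorated_zigzag_eqv_trivial_id
    {J : Type u} [Category.{u} J] (F : J ⥤ Cat.{u, u})
    {i i' : J} {a : F.obj i} {a' : F.obj i'}
    (E : DecZig F i a i' a') (hE : DecZig.IsId F E) :
    Eqv F ⟨E⟩ ⟨DecZig.triv (𝟙 a')⟩ := by
  induction hE with
  | triv h =>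
      subst h
      simp only [eqToHom_refl]
      exact Relation.EqvGen.refl _
  | cons l r h hrest IH =>
      rename_i i2 j₁ i₁ j a2 a₁ b rest
      obtain ⟨R', cR, hR, hroofs⟩ := exists_idCell hrest
      have h₀ : a₁ = (F.map (𝟙 j₁)).toFunctor.obj a₁ := by simp
      have h2 : (F.map r).toFunctor.obj ((F.map (𝟙 j₁)).toFunctor.obj a₁)
          = (F.map (𝟙 i₁)).toFunctor.obj ((F.map r).toFunctor.obj a₁) := by simp
      have c₁ : Cell F l (𝟙 j) (.cons (𝟙 j₁) r (eqToHom h₀) rest)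
          (.cons l r ((F.map l).toFunctor.map (eqToHom h₀) ≫ eqToHom rfl)
            (DecZig.comp (.triv (eqToHom h2)) R')) :=
        Cell.roofCons (𝟙 j₁) r l r l (𝟙 i₁) (𝟙 j₁) (by simp) (by simp)
          (eqToHom h₀) rfl h2 cR
      have c₂ : Cell F r (𝟙 j) (.cons (𝟙 j₁) r (eqToHom h₀) rest)
          (DecZig.comp (.triv ((F.map r).toFunctor.map (eqToHom h₀) ≫ eqToHom h2)) R') :=
        Cell.squareCons (𝟙 j₁) r r (𝟙 i₁) (by simp) (eqToHom h₀) h2 cR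
      have e1 : (DecZ.mk (DecZig.cons l r (eqToHom h) rest) : DecZ F)
          = DecZ.mk (DecZig.cons l r ((F.map l).toFunctor.map (eqToHom h₀) ≫ eqToHom rfl)
              (DecZig.comp (.triv (eqToHom h2)) R')) :=
        isId_ext (.cons l r h hrest)
          (isId_cons' _ _ _ (by rw [← h₀]) (by simp [eqToHom_map])
            (isId_comp_triv _ h2 rfl hR))
          h (by simp [roofs_comp_triv, hroofs])
      have e2 : (DecZ.mk (DecZig.comp
            (.triv ((F.map r).toFunctor.map (eqToHom h₀) ≫ eqToHom h2)) R') : DecZ F)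
          = DecZ.mk rest :=
        isId_ext (isId_comp_triv _ (by simp) (by simp [eqToHom_map]) hR) hrest rfl
          (by rw [roofs_comp_triv, hroofs])
      have s1 : Eqv F (DecZ.mk (DecZig.cons (𝟙 j₁) r (eqToHom h₀) rest))
          (DecZ.mk (DecZig.cons l r ((F.map l).toFunctor.map (eqToHom h₀) ≫ eqToHom rfl)
            (DecZig.comp (.triv (eqToHom h2)) R'))) :=
        Relation.EqvGen.rel _ _ ⟨l, 𝟙 j, _, c₁, rfl⟩
      have s2 : Eqv F (DecZ.mk (DecZig.cons (𝟙 j₁) r (eqToHom h₀) rest))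
          (DecZ.mk (DecZig.comp
            (.triv ((F.map r).toFunctor.map (eqToHom h₀) ≫ eqToHom h2)) R')) :=
        Relation.EqvGen.rel _ _ ⟨r, 𝟙 j, _, c₂, rfl⟩
      have s3 : Eqv F (DecZ.mk (DecZig.comp
            (.triv ((F.map r).toFunctor.map (eqToHom h₀) ≫ eqToHom h2)) R'))
          (DecZ.mk (DecZig.triv (𝟙 b))) := by rw [e2]; exact IH
      rw [e1]
      exact Relation.EqvGen.trans _ _ _ (Relation.EqvGen.symm _ _ s1)
        (Relation.EqvGen.trans _ _ _ s2 s3)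

end ZigZagColimit
end

section
/- Let F : J ⥤ Cat. For any F-decorated zig-zag D : (i, a) ⇝ (j, b) and any identity-decorated zig-zag E : (j, b) ⇝ (j′, b′), the concatenation E ∘ D : (i, a) ⇝ (j′, b′) is related to D under the equivalence relation ≈ on F-decorated zig-zags. Likewise, for any identity-decorated zig-zag E′ : (i′, a′) ⇝ (i, a), the concatenation D ∘ E′ is related to D. -/
open CategoryTheory

universe u

namespace ZigZagColimit

variable {J : Type u} [Category.{u} J]

namespace DecZig

variable {F : J ⥤ Cat.{u, u}}

theorem id_comp {i j : J} {a : F.obj i} {b : F.obj j} (Z : DecZig F i a j b) :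
    (DecZig.triv (𝟙 a)).comp Z = Z := by
  cases Z <;> simp [DecZig.comp]

theorem comp_id {i j : J} {a : F.obj i} {b : F.obj j} (Z : DecZig F i a j b) :
    Z.comp (DecZig.triv (𝟙 b)) = Z := by
  induction Z with
  | triv f => simp [DecZig.comp]
  | cons l r f rest ih => simp [DecZig.comp, ih]

theorem mk_trivL {i j : J} {a a' : F.obj i} {b : F.obj j} (h : a' = a)
    (Z : DecZig F i a j b) :
    DecZ.mk ((DecZig.triv (eqToHom h)).comp Z) = DecZ.mk Z := by
  subst h; rw [eqToHom_refl, id_comp]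

theorem mk_trivR {i j : J} {a : F.obj i} {b b' : F.obj j} (h : b = b')
    (Z : DecZig F i a j b) :
    DecZ.mk (Z.comp (DecZig.triv (eqToHom h))) = DecZ.mk Z := by
  subst h; rw [eqToHom_refl, comp_id]

theorem comp_assoc {i j k m : J} {a : F.obj i} {b : F.obj j} {c : F.obj k} {d : F.obj m}
    (X : DecZig F i a j b) (Y : DecZig F j b k c) (Z : DecZig F k c m d) :
    (X.comp Y).comp Z = X.comp (Y.comp Z) := by
  induction X with
  | triv f =>
    cases Y with
    | triv g => cases Z <;> simp [DecZig.comp]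
    | cons l r g rest => simp [DecZig.comp]
  | cons l r f rest ih => simp [DecZig.comp, ih]

/-- Changing the middle object of a `cons` along an equality. -/
theorem consCongr {i j₁ i₁ j : J} {a : F.obj i} {a₁ a₁' : F.obj j₁} {b : F.obj j}
    (h : a₁ = a₁') (l : j₁ ⟶ i) (r : j₁ ⟶ i₁) (f : a ⟶ (F.map l).toFunctor.obj a₁)
    (rest : DecZig F i₁ ((F.map r).toFunctor.obj a₁) j b) :
    DecZig.cons l r f rest =
      DecZig.cons (a₁ := a₁') l r (f ≫ eqToHom (by rw [h]))
        ((DecZig.triv (eqToHom (by rw [h]))).comp rest) := by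
  subst h; simp [id_comp]

theorem trivL_heq {i m : J} {s s' : F.obj i} {c : F.obj m} (ε : s = s')
    (Z' : DecZig F i s' m c) (W : DecZig F i s m c) (h : HEq Z' W) :
    (DecZig.triv (eqToHom ε)).comp Z' = W := by
  subst ε; rw [eq_of_heq h, eqToHom_refl, id_comp]

end DecZig

namespace DecZig
variable {F : J ⥤ Cat.{u, u}}

theorem mk_out {i j i' j' : J} {a : F.obj i} {b : F.obj j} {a' : F.obj i'} {b' : F.obj j'}
    {Z : DecZig F i a j b} {Z' : DecZig F i' a' j' b'}
    (h : DecZ.mk Z = DecZ.mk Z') :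
    i = i' ∧ j = j' ∧ HEq a a' ∧ HEq b b' ∧ HEq Z Z' := by
  cases h; exact ⟨rfl, rfl, HEq.rfl, HEq.rfl, HEq.rfl⟩

lemma mapIdObj {i : J} (a : F.obj i) : (F.map (𝟙 i)).toFunctor.obj a = a :=
  Functor.congr_obj (congrArg Cat.Hom.toFunctor (F.map_id i)) a

lemma mapIdMap {i : J} {a b : F.obj i} (f : a ⟶ b) :
    (F.map (𝟙 i)).toFunctor.map f = eqToHom (mapIdObj a) ≫ f ≫ eqToHom (mapIdObj b).symm := by
  have := Functor.congr_hom (congrArg Cat.Hom.toFunctor (F.map_id i)) f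
  simpa using this

end DecZig

namespace DecZig
variable {F : J ⥤ Cat.{u, u}}

lemma trivL_trivL_heq {i m : J} {s1 s2 s3 : F.obj i} {c : F.obj m}
    (ε1 : s1 = s2) (ε2 : s2 = s3)
    (Z' : DecZig F i s3 m c) (W : DecZig F i s1 m c) (h : HEq Z' W) :
    (DecZig.triv (eqToHom ε1)).comp ((DecZig.triv (eqToHom ε2)).comp Z') = W := by
  subst ε1; subst ε2; rw [eq_of_heq h]; simp [id_comp]

theorem ext_cell {i j₁ i₁ m m' p : J} (l₀ : j₁ ⟶ i) (r₀ : j₁ ⟶ i₁)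
    {a : F.obj i} {a₁ : F.obj j₁} {c : F.obj m}
    (f₀ : a ⟶ (F.map l₀).toFunctor.obj a₁)
    (rest : DecZig F i₁ ((F.map r₀).toFunctor.obj a₁) m c)
    {ρj : m ⟶ m'}
    (Z' : DecZig F i₁ ((F.map (𝟙 i₁)).toFunctor.obj ((F.map r₀).toFunctor.obj a₁)) m' ((F.map ρj).toFunctor.obj c))
    (hc : Cell F (𝟙 i₁) ρj rest Z')
    {cW : F.obj p}
    (W : DecZig F i₁ ((F.map r₀).toFunctor.obj a₁) p cW)
    (hmk : DecZ.mk Z' = DecZ.mk W) :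
    ∃ Z'' : DecZig F i ((F.map (𝟙 i)).toFunctor.obj a) m' ((F.map ρj).toFunctor.obj c),
      Cell F (𝟙 i) ρj (.cons l₀ r₀ f₀ rest) Z'' ∧
      DecZ.mk Z'' = DecZ.mk (.cons l₀ r₀ f₀ W) := by
  have he1 : (F.map (𝟙 i)).toFunctor.obj ((F.map l₀).toFunctor.obj a₁)
      = (F.map l₀).toFunctor.obj ((F.map (𝟙 j₁)).toFunctor.obj a₁) := by rw [mapIdObj, mapIdObj]
  have he2 : (F.map r₀).toFunctor.obj ((F.map (𝟙 j₁)).toFunctor.obj a₁)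
      = (F.map (𝟙 i₁)).toFunctor.obj ((F.map r₀).toFunctor.obj a₁) := by rw [mapIdObj, mapIdObj]
  obtain ⟨-, hj, -, hb, hz⟩ := mk_out hmk
  subst hj
  have hb' : (F.map ρj).toFunctor.obj c = cW := eq_of_heq hb
  subst hb'
  refine ⟨_, Cell.roofCons l₀ r₀ l₀ r₀ (𝟙 i) (𝟙 i₁) (𝟙 j₁) (by simp) (by simp) f₀ he1 he2 hc,
    ?_⟩
  rw [consCongr (mapIdObj a₁) l₀ r₀ _ _]
  rw [trivL_trivL_heq (by rw [mapIdObj]) he2 Z' W hz]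
  have hf : ((F.map (𝟙 i)).toFunctor.map f₀ ≫ eqToHom he1) ≫ eqToHom (by rw [mapIdObj] : (F.map l₀).toFunctor.obj ((F.map (𝟙 j₁)).toFunctor.obj a₁) = (F.map l₀).toFunctor.obj a₁)
      = eqToHom (mapIdObj a) ≫ f₀ := by
    rw [mapIdMap]; simp
  rw [hf]
  have : DecZig.cons l₀ r₀ (eqToHom (mapIdObj a) ≫ f₀) W
      = (DecZig.triv (eqToHom (mapIdObj a))).comp (DecZig.cons l₀ r₀ f₀ W) := by simp [DecZig.comp]
  rw [this, mk_trivL]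

end DecZig

namespace DecZig
variable {F : J ⥤ Cat.{u, u}}

theorem idCell {i j : J} {a : F.obj i} {c : F.obj j} (D : DecZig F i a j c) :
    ∃ Z : DecZig F i ((F.map (𝟙 i)).toFunctor.obj a) j ((F.map (𝟙 j)).toFunctor.obj c),
      Cell F (𝟙 i) (𝟙 j) D Z ∧ DecZ.mk Z = DecZ.mk D := by
  induction D with
  | triv f =>
    refine ⟨_, Cell.triv (𝟙 _) f, ?_⟩
    rw [show DecZig.triv ((F.map (𝟙 _)).toFunctor.map f)
        = (DecZig.triv (eqToHom (mapIdObj _))).comp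
            ((DecZig.triv f).comp (DecZig.triv (eqToHom (mapIdObj _).symm))) by
      simp [DecZig.comp, mapIdMap]]
    rw [mk_trivL]
    exact mk_trivR _ _
  | cons l₀ r₀ f₀ rest ih =>
    obtain ⟨Z', hc, hmk⟩ := ih
    exact ext_cell l₀ r₀ f₀ rest Z' hc rest hmk

end DecZig

namespace DecZig
variable {F : J ⥤ Cat.{u, u}}

lemma trivL_trivL_heq' {i m : J} {s1 s2 s3 : F.obj i} {c c' : F.obj m}
    (ε1 : s1 = s2) (ε2 : s2 = s3) (εb : c = c')
    (Z' : DecZig F i s3 m c') (W : DecZig F i s1 m c) (h : HEq Z' W) :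
    (DecZig.triv (eqToHom ε1)).comp ((DecZig.triv (eqToHom ε2)).comp Z')
      = W.comp (DecZig.triv (eqToHom εb)) := by
  subst ε1; subst ε2; subst εb; rw [eq_of_heq h]; simp [id_comp, comp_id]

/-- Absorbing an identity-decorated roof at the front. -/
theorem consEqv {i₀ j₁ i₁ m : J} (l : j₁ ⟶ i₀) (r : j₁ ⟶ i₁) {a₁ : F.obj j₁}
    {b₀ : F.obj i₀} (h : b₀ = (F.map l).toFunctor.obj a₁)
    {e : F.obj m} (W : DecZig F i₁ ((F.map r).toFunctor.obj a₁) m e) :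
    Eqv F ⟨DecZig.cons l r (eqToHom h) W⟩ ⟨W⟩ := by
  obtain ⟨W', hcW, hmkW⟩ := idCell W
  obtain ⟨-, -, -, hbW, hzW⟩ := mk_out hmkW
  set Z : DecZig F j₁ a₁ m e := DecZig.cons (𝟙 j₁) r (eqToHom (mapIdObj a₁).symm) W with hZ
  -- Cell 1 : Z ⇝ W
  have h1sq : (F.map r).toFunctor.obj ((F.map (𝟙 j₁)).toFunctor.obj a₁)
      = (F.map (𝟙 i₁)).toFunctor.obj ((F.map r).toFunctor.obj a₁) := by rw [mapIdObj, mapIdObj]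
  have cell1 : Cell F r (𝟙 m) Z
      ((DecZig.triv ((F.map r).toFunctor.map (eqToHom (mapIdObj a₁).symm) ≫ eqToHom h1sq)).comp W') :=
    Cell.squareCons (𝟙 j₁) r r (𝟙 i₁) (by simp) (eqToHom (mapIdObj a₁).symm) h1sq hcW
  have mk1 : DecZ.mk
      ((DecZig.triv ((F.map r).toFunctor.map (eqToHom (mapIdObj a₁).symm) ≫ eqToHom h1sq)).comp W')
      = DecZ.mk W := by
    rw [show (F.map r).toFunctor.map (eqToHom (mapIdObj a₁).symm) ≫ eqToHom h1sq
        = eqToHom (by rw [mapIdObj]) by simp [eqToHom_map]]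
    rw [mk_trivL]; exact hmkW
  have rel1 : CellRel F ⟨Z⟩ ⟨W⟩ := ⟨r, 𝟙 m, _, cell1, mk1.symm⟩
  -- Cell 2 : Z ⇝ cons l r (eqToHom h) W
  have h1r : (F.map l).toFunctor.obj ((F.map (𝟙 j₁)).toFunctor.obj a₁)
      = (F.map l).toFunctor.obj ((F.map (𝟙 j₁)).toFunctor.obj a₁) := rfl
  have cell2 : Cell F l (𝟙 m) Z
      (DecZig.cons l r ((F.map l).toFunctor.map (eqToHom (mapIdObj a₁).symm) ≫ eqToHom h1r)
        ((DecZig.triv (eqToHom h1sq)).comp W')) :=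
    Cell.roofCons (𝟙 j₁) r l r l (𝟙 i₁) (𝟙 j₁) (by simp) (by simp)
      (eqToHom (mapIdObj a₁).symm) h1r h1sq hcW
  have mk2 : DecZ.mk
      (DecZig.cons l r ((F.map l).toFunctor.map (eqToHom (mapIdObj a₁).symm) ≫ eqToHom h1r)
        ((DecZig.triv (eqToHom h1sq)).comp W'))
      = DecZ.mk (DecZig.cons l r (eqToHom h) W) := by
    rw [consCongr (mapIdObj a₁) l r _ _]
    rw [trivL_trivL_heq' (by rw [mapIdObj]) h1sq (mapIdObj e).symm W' W hzW]
    rw [show DecZig.cons l r (((F.map l).toFunctor.map (eqToHom (mapIdObj a₁).symm) ≫ eqToHom h1r)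
          ≫ eqToHom (by rw [mapIdObj]))
        (W.comp (DecZig.triv (eqToHom (mapIdObj e).symm)))
      = ((DecZig.triv (eqToHom h.symm)).comp
          (DecZig.cons l r (eqToHom h) W)).comp
            (DecZig.triv (eqToHom (mapIdObj e).symm)) by
      simp [DecZig.comp, eqToHom_map]]
    rw [mk_trivR]
    exact mk_trivL _ _
  have rel2 : CellRel F ⟨Z⟩ ⟨DecZig.cons l r (eqToHom h) W⟩ :=
    ⟨l, 𝟙 m, _, cell2, mk2.symm⟩
  exact Relation.EqvGen.trans _ _ _
    (Relation.EqvGen.symm _ _ (Relation.EqvGen.rel _ _ rel2)) (Relation.EqvGen.rel _ _ rel1)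

end DecZig

namespace DecZig
variable {F : J ⥤ Cat.{u, u}}

/-- Replace the final vertex `(jj, (F.map l).toFunctor.obj a₁)` of a decorated zig-zag by the roof
vertex `(j₁, a₁)`, turning the last decoration into a decoration over the left leg `l`. -/
def attach {j₁ jj : J} (l : j₁ ⟶ jj) (a₁ : F.obj j₁) :
    ∀ {i : J} {a : F.obj i}, DecZig F i a jj ((F.map l).toFunctor.obj a₁) → DecZig F i a j₁ a₁
  | _, _, .triv f => .cons l (𝟙 j₁) f (.triv (eqToHom (mapIdObj a₁)))
  | _, _, .cons l₀ r₀ f₀ rest => .cons l₀ r₀ f₀ (attach l a₁ rest)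

theorem attach_cellA {j₁ jj : J} (l : j₁ ⟶ jj) (a₁ : F.obj j₁) :
    ∀ {i : J} {a : F.obj i} (D : DecZig F i a jj ((F.map l).toFunctor.obj a₁)),
    ∃ ZA : DecZig F i ((F.map (𝟙 i)).toFunctor.obj a) jj ((F.map l).toFunctor.obj a₁),
      Cell F (𝟙 i) l (attach l a₁ D) ZA ∧ DecZ.mk ZA = DecZ.mk D
  | _, _, .triv f => by
    simp only [attach]
    have h1 : (F.map (𝟙 jj)).toFunctor.obj ((F.map l).toFunctor.obj a₁)
        = (F.map l).toFunctor.obj ((F.map (𝟙 j₁)).toFunctor.obj a₁) := by rw [mapIdObj, mapIdObj]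
    refine ⟨_, Cell.squareCons l (𝟙 j₁) (𝟙 jj) l (by simp) f h1
      (Cell.triv l (eqToHom (mapIdObj a₁))), ?_⟩
    rw [show (DecZig.triv ((F.map (𝟙 jj)).toFunctor.map f ≫ eqToHom h1)).comp
        (DecZig.triv ((F.map l).toFunctor.map (eqToHom (mapIdObj a₁))))
        = (DecZig.triv (eqToHom (mapIdObj _))).comp (DecZig.triv f) by
      simp [DecZig.comp, mapIdMap, eqToHom_map]]
    exact mk_trivL _ _
  | _, _, .cons l₀ r₀ f₀ rest => by
    simp only [attach]
    obtain ⟨ZA', hc, hmk⟩ := attach_cellA l a₁ rest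
    exact ext_cell l₀ r₀ f₀ (attach l a₁ rest) ZA' hc rest hmk

end DecZig

namespace DecZig
variable {F : J ⥤ Cat.{u, u}}

theorem attach_cellB {j₁ jj i₁ : J} (l : j₁ ⟶ jj) (r : j₁ ⟶ i₁) (a₁ : F.obj j₁) :
    ∀ {i : J} {a : F.obj i} (D : DecZig F i a jj ((F.map l).toFunctor.obj a₁)),
    ∃ ZB : DecZig F i ((F.map (𝟙 i)).toFunctor.obj a) i₁ ((F.map r).toFunctor.obj a₁),
      Cell F (𝟙 i) r (attach l a₁ D) ZB ∧
      DecZ.mk ZB = DecZ.mk (D.comp (.cons l r (𝟙 ((F.map l).toFunctor.obj a₁))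
        (.triv (𝟙 ((F.map r).toFunctor.obj a₁)))))
  | _, _, .triv f => by
    simp only [attach]
    have h1 : (F.map (𝟙 jj)).toFunctor.obj ((F.map l).toFunctor.obj a₁)
        = (F.map l).toFunctor.obj ((F.map (𝟙 j₁)).toFunctor.obj a₁) := by rw [mapIdObj, mapIdObj]
    have h2 : (F.map r).toFunctor.obj ((F.map (𝟙 j₁)).toFunctor.obj a₁)
        = (F.map r).toFunctor.obj ((F.map (𝟙 j₁)).toFunctor.obj a₁) := rfl
    refine ⟨_, Cell.roofCons l (𝟙 j₁) l r (𝟙 jj) r (𝟙 j₁) (by simp) (by simp) f h1 h2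
      (Cell.triv r (eqToHom (mapIdObj a₁))), ?_⟩
    rw [consCongr (mapIdObj a₁) l r _ _]
    rw [show DecZig.cons l r
        (((F.map (𝟙 jj)).toFunctor.map f ≫ eqToHom h1) ≫ eqToHom (by rw [mapIdObj]))
        ((DecZig.triv (eqToHom (by rw [mapIdObj]))).comp
          ((DecZig.triv (eqToHom h2)).comp
            (DecZig.triv ((F.map r).toFunctor.map (eqToHom (mapIdObj a₁))))))
        = (DecZig.triv (eqToHom (mapIdObj _))).comp
            ((DecZig.triv f).comp (DecZig.cons l r (𝟙 ((F.map l).toFunctor.obj a₁))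
              (DecZig.triv (𝟙 ((F.map r).toFunctor.obj a₁))))) by
      simp [DecZig.comp, mapIdMap, eqToHom_map]]
    exact mk_trivL _ _
  | _, _, .cons l₀ r₀ f₀ rest => by
    simp only [attach]
    obtain ⟨ZB', hc, hmk⟩ := attach_cellB l r a₁ rest
    have := ext_cell l₀ r₀ f₀ (attach l a₁ rest) ZB' hc
      (rest.comp (.cons l r (𝟙 ((F.map l).toFunctor.obj a₁)) (.triv (𝟙 ((F.map r).toFunctor.obj a₁))))) hmk
    simpa [DecZig.comp] using this

end DecZig

namespace DecZig
variable {F : J ⥤ Cat.{u, u}}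

/-- Absorbing an identity-decorated roof at the end. -/
theorem compRoofEqv {j₁ jj i₁ : J} (l : j₁ ⟶ jj) (r : j₁ ⟶ i₁) {a₁ : F.obj j₁}
    {i : J} {a : F.obj i} {c : F.obj jj} (h : c = (F.map l).toFunctor.obj a₁)
    (D : DecZig F i a jj c) :
    Eqv F ⟨D.comp (.cons l r (eqToHom h) (.triv (𝟙 ((F.map r).toFunctor.obj a₁))))⟩ ⟨D⟩ := by
  subst h
  obtain ⟨ZA, cA, mA⟩ := attach_cellA l a₁ D
  obtain ⟨ZB, cB, mB⟩ := attach_cellB l r a₁ D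
  have relA : CellRel F ⟨attach l a₁ D⟩ ⟨D⟩ := ⟨𝟙 i, l, ZA, cA, mA.symm⟩
  have relB : CellRel F ⟨attach l a₁ D⟩
      ⟨D.comp (.cons l r (𝟙 ((F.map l).toFunctor.obj a₁)) (.triv (𝟙 ((F.map r).toFunctor.obj a₁))))⟩ :=
    ⟨𝟙 i, r, ZB, cB, mB.symm⟩
  rw [eqToHom_refl]
  exact Relation.EqvGen.trans _ _ _
    (Relation.EqvGen.symm _ _ (Relation.EqvGen.rel _ _ relB)) (Relation.EqvGen.rel _ _ relA)

theorem comp_isId_eqv {j b0 j' b'} (E : DecZig F j b0 j' b') (hE : DecZig.IsId F E) :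
    ∀ {i : J} {a : F.obj i} (D : DecZig F i a j b0), Eqv F ⟨D.comp E⟩ ⟨D⟩ := by
  induction hE with
  | triv h =>
    intro i a D
    rw [show (DecZ.mk (D.comp (.triv (eqToHom h))) : DecZ F) = DecZ.mk D from mk_trivR h D]
    exact Relation.EqvGen.refl _
  | cons l r h hrest ih =>
    intro i a D
    rename_i rest
    have key : D.comp (.cons l r (eqToHom h) rest)
        = (D.comp (.cons l r (eqToHom h) (.triv (𝟙 _)))).comp rest := by
      rw [comp_assoc]; simp [DecZig.comp, id_comp]
    rw [key]
    exact Relation.EqvGen.trans _ _ _ (ih _) (compRoofEqv l r h D)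

theorem isId_comp_eqv {i' a' i0 a0} (E' : DecZig F i' a' i0 a0) (hE' : DecZig.IsId F E') :
    ∀ {m : J} {e : F.obj m} (D : DecZig F i0 a0 m e), Eqv F ⟨E'.comp D⟩ ⟨D⟩ := by
  induction hE' with
  | triv h =>
    intro m e D
    rw [show (DecZ.mk ((DecZig.triv (eqToHom h)).comp D) : DecZ F) = DecZ.mk D from
      mk_trivL h D]
    exact Relation.EqvGen.refl _
  | cons l r h hrest ih =>
    intro m e D
    rename_i rest
    rw [show (DecZig.cons l r (eqToHom h) rest).comp D
        = DecZig.cons l r (eqToHom h) (rest.comp D) from by simp [DecZig.comp]]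
    exact Relation.EqvGen.trans _ _ _ (consEqv l r h (rest.comp D)) (ih D)

end DecZig

/-- Concatenating a decorated zig-zag `D : (i, a) ⇝ (j, b)` with an
identity-decorated zig-zag `E : (j, b) ⇝ (j′, b′)` on the right, or with an
identity-decorated zig-zag `E′ : (i′, a′) ⇝ (i, a)` on the left, yields a decorated zig-zag
related to `D` under `≈`. -/
theorem comp_idDecorated_eqv
    {J : Type u} [Category.{u} J] (F : J ⥤ Cat.{u, u})
    {i j j' i' : J} {a : F.obj i} {b : F.obj j} {b' : F.obj j'} {a' : F.obj i'}
    (D : DecZig F i a j b)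
    (E : DecZig F j b j' b') (hE : DecZig.IsId F E)
    (E' : DecZig F i' a' i a) (hE' : DecZig.IsId F E') :
    Eqv F ⟨D.comp E⟩ ⟨D⟩ ∧ Eqv F ⟨E'.comp D⟩ ⟨D⟩ := by
  exact ⟨DecZig.comp_isId_eqv E hE D, DecZig.isId_comp_eqv E' hE' D⟩

end ZigZagColimit
end

section
/- Let F : J ⥤ Cat. Suppose D₁ : (i, a) ⇝ (j, b) and D₁′ : (i′, a′) ⇝ (j′, b′) are F-decorated zig-zags related by ≈ (via a chain of cells whose boundary at the target is an identity-decorated zig-zag (j, b) ⇝ (j′, b′)), and D₂ : (j, b) ⇝ (k, c) and D₂′ : (j′, b′) ⇝ (k′, c′) are F-decorated zig-zags related by ≈ (via a chain of cells whose boundary at the source is the same identity-decorated zig-zag (j, b) ⇝ (j′, b′)). Then the concatenations D₂ ∘ D₁ : (i, a) ⇝ (k, c) and D₂′ ∘ D₁′ : (i′, a′) ⇝ (k′, c′) are related by ≈. -/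
open CategoryTheory

universe u

namespace ZigZagColimit

variable {J : Type u} [Category.{u} J]

/-- A vertical chain of 2-cells of `ℤF` between decorated zig-zags, recording its two
vertical boundary zig-zags (which are identity-decorated zig-zags between the endpoints).
A chain is an alternating sequence of roofs of cells: each step consists of a middle
decorated zig-zag with a cell pointing up to the previous stage and a cell pointing down to
the next stage, the vertical boundary legs being assembled into identity-decorated
zig-zags. -/
inductive DChain (F : J ⥤ Cat.{u, u}) :
    ∀ {i j i' j' : J} {a : F.obj i} {b : F.obj j} {a' : F.obj i'} {b' : F.obj j'},
      DecZig F i a i' a' → DecZig F j b j' b' →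
      DecZig F i a j b → DecZig F i' a' j' b' → Prop
  | nil {i j : J} {a : F.obj i} {b : F.obj j} (D : DecZig F i a j b) :
      DChain F (.triv (𝟙 a)) (.triv (𝟙 b)) D D
  | cons {m i i₁ mj j j₁ i' j' : J}
      (l : m ⟶ i) (r : m ⟶ i₁) (lj : mj ⟶ j) (rj : mj ⟶ j₁)
      {am : F.obj m} {bm : F.obj mj} {a' : F.obj i'} {b' : F.obj j'}
      {Dmid : DecZig F m am mj bm}
      {Dtop : DecZig F i ((F.map l).toFunctor.obj am) j ((F.map lj).toFunctor.obj bm)}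
      {Dnext : DecZig F i₁ ((F.map r).toFunctor.obj am) j₁ ((F.map rj).toFunctor.obj bm)}
      {El : DecZig F i₁ ((F.map r).toFunctor.obj am) i' a'}
      {Er : DecZig F j₁ ((F.map rj).toFunctor.obj bm) j' b'}
      {Dbot : DecZig F i' a' j' b'}
      (cup : Cell F l lj Dmid Dtop) (cdn : Cell F r rj Dmid Dnext)
      (rest : DChain F El Er Dnext Dbot) :
      DChain F (.cons l r (eqToHom rfl) El) (.cons lj rj (eqToHom rfl) Er) Dtop Dbot

theorem DecZig.comp_assoc_s6 {F : J ⥤ Cat.{u, u}} :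
    ∀ {i j k m : J} {a : F.obj i} {b : F.obj j} {c : F.obj k} {d : F.obj m}
      (X : DecZig F i a j b) (Y : DecZig F j b k c) (Z : DecZig F k c m d),
      (X.comp Y).comp Z = X.comp (Y.comp Z)
  | _, _, _, _, _, _, _, _, .triv f, .triv g, Z => by
      cases Z <;> simp [DecZig.comp, Category.assoc]
  | _, _, _, _, _, _, _, _, .triv f, .cons l r g rest, Z => by
      simp [DecZig.comp]
  | _, _, _, _, _, _, _, _, .cons l r f rest, Y, Z => by
      simp [DecZig.comp, DecZig.comp_assoc_s6 rest Y Z]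

theorem DecZig.triv_comp_triv_comp {F : J ⥤ Cat.{u, u}}
    {i j : J} {a b c : F.obj i} {d : F.obj j}
    (g : a ⟶ b) (h : b ⟶ c) (X : DecZig F i c j d) :
    DecZig.comp (.triv g) (DecZig.comp (.triv h) X) =
      DecZig.comp (.triv (g ≫ h)) X := by
  cases X <;> simp [DecZig.comp, Category.assoc]

/-- Horizontal composition of 2-cells. -/
theorem Cell.comp' {F : J ⥤ Cat.{u, u}} :
    ∀ {i j k i' j' k' : J} {ρi : i ⟶ i'} {ρj : j ⟶ j'} {ρk : k ⟶ k'}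
      {a : F.obj i} {b : F.obj j} {c : F.obj k}
      {A : DecZig F i a j b} {B : DecZig F j b k c}
      {A' : DecZig F i' ((F.map ρi).toFunctor.obj a) j' ((F.map ρj).toFunctor.obj b)}
      {B' : DecZig F j' ((F.map ρj).toFunctor.obj b) k' ((F.map ρk).toFunctor.obj c)},
      Cell F ρi ρj A A' → Cell F ρj ρk B B' →
      Cell F ρi ρk (A.comp B) (A'.comp B') := by
  intro i j k i' j' k' ρi ρj ρk a b c A B A' B' hA
  induction hA with
  | triv ρ f =>
      intro hB
      cases hB with
      | triv ρ' g =>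
          simp only [DecZig.comp]
          rw [← Functor.map_comp]
          exact Cell.triv _ _
      | squareCons =>
          rename_i i₁x j₁x rx a₁x lx ρ₁x w h1 f₀ rest rest' hc
          simp only [DecZig.comp]
          rw [DecZig.triv_comp_triv_comp, ← Category.assoc, ← Functor.map_comp]
          exact Cell.squareCons lx rx ρ ρ₁x w (f ≫ f₀) h1 hc
      | roofCons =>
          rename_i i₁x i₁'x j₁x j₁'x rx r'x ρ₁x ρtx wr a₁x h2 lx l'x wl h1 f₀ rest rest' hc
          simp only [DecZig.comp]
          rw [← Category.assoc, ← Functor.map_comp]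
          exact Cell.roofCons lx rx l'x r'x ρ ρ₁x ρtx wl wr (f ≫ f₀) h1 h2 hc
  | squareCons l r ρi₂ ρ₁ w f₀ h1 hc ih =>
      intro hB
      simp only [DecZig.comp]
      rw [DecZig.comp_assoc_s6]
      exact Cell.squareCons l r ρi₂ ρ₁ w f₀ h1 (ih hB)
  | roofCons l r l' r' ρi₂ ρ₁ ρt wl wr f₀ h1 h2 hc ih =>
      intro hB
      simp only [DecZig.comp]
      rw [DecZig.comp_assoc_s6]
      exact Cell.roofCons l r l' r' ρi₂ ρ₁ ρt wl wr f₀ h1 h2 (ih hB)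

/-- Inversion for a chain whose right boundary is a nontrivial identity-decorated zig-zag.
The decoration is generalized to `eqToHom hx` so that `cases` succeeds. -/
theorem DChain.invConsRight {F : J ⥤ Cat.{u, u}} {mj j j₁ j' : J} {bm : F.obj mj}
    {b' : F.obj j'} {lj : mj ⟶ j} {rj : mj ⟶ j₁} {x : F.obj j}
    {hx : x = (F.map lj).toFunctor.obj bm}
    {Er : DecZig F j₁ ((F.map rj).toFunctor.obj bm) j' b'}
    {i i' : J} {a : F.obj i} {a' : F.obj i'}
    {L : DecZig F i a i' a'} {D₁ : DecZig F i a j x} {D₁' : DecZig F i' a' j' b'}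
    (ch : DChain F L (.cons lj rj (eqToHom hx) Er) D₁ D₁')
    {motive : Prop}
    (H : ∀ {m i₁ : J} (l : m ⟶ i) (r : m ⟶ i₁) {am : F.obj m}
        (ha : a = (F.map l).toFunctor.obj am)
        {El : DecZig F i₁ ((F.map r).toFunctor.obj am) i' a'}
        {Dmid : DecZig F m am mj bm}
        {Dtop : DecZig F i ((F.map l).toFunctor.obj am) j ((F.map lj).toFunctor.obj bm)}
        {Dnext : DecZig F i₁ ((F.map r).toFunctor.obj am) j₁ ((F.map rj).toFunctor.obj bm)},
        HEq L (DecZig.cons l r (eqToHom rfl) El) → HEq D₁ Dtop →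
        Cell F l lj Dmid Dtop → Cell F r rj Dmid Dnext →
        DChain F El Er Dnext D₁' → motive) : motive := by
  cases ch with
  | cons l r _ _ cup cdn rest =>
      exact H l r rfl HEq.rfl HEq.rfl cup cdn rest

theorem concat_aux {F : J ⥤ Cat.{u, u}}
    {j j' k k' : J} {b : F.obj j} {b' : F.obj j'} {c : F.obj k} {c' : F.obj k'}
    {E : DecZig F j b j' b'} {R : DecZig F k c k' c'}
    {D₂ : DecZig F j b k c} {D₂' : DecZig F j' b' k' c'}
    (ch₂ : DChain F E R D₂ D₂') :
    ∀ {i i' : J} {a : F.obj i} {a' : F.obj i'}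
      {L : DecZig F i a i' a'} {D₁ : DecZig F i a j b} {D₁' : DecZig F i' a' j' b'},
      DChain F L E D₁ D₁' → Eqv F ⟨D₁.comp D₂⟩ ⟨D₁'.comp D₂'⟩ := by
  induction ch₂ with
  | nil D₂ =>
      intro i i' a a' L D₁ D₁' ch₁
      cases ch₁ with
      | nil D₁ => exact Relation.EqvGen.refl _
  | cons lj lk rj2 rk cup cdn rest₂ ih =>
      rename_i Dmid2 Dtop2 Dnext2 El2 Er2 Dbot2
      intro i i' a a' L D₁ D₁' ch₁
      refine DChain.invConsRight ch₁ ?_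
      intro m i₁ l r am ha El Dmid Dtop Dnext hL hD₁ cup₁ cdn₁ rest₁
      subst ha
      rw [eq_of_heq hD₁]
      have h1 : CellRel F ⟨Dmid.comp Dmid2⟩ ⟨Dtop.comp Dtop2⟩ :=
        ⟨l, rj2, _, Cell.comp' cup₁ cup, rfl⟩
      have h2 : CellRel F ⟨Dmid.comp Dmid2⟩ ⟨Dnext.comp Dnext2⟩ :=
        ⟨r, rk, _, Cell.comp' cdn₁ cdn, rfl⟩
      exact Relation.EqvGen.trans _ _ _
        (Relation.EqvGen.symm _ _ (Relation.EqvGen.rel _ _ h1))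
        (Relation.EqvGen.trans _ _ _ (Relation.EqvGen.rel _ _ h2) (ih rest₁))

/-- **Statement 7.** -/
theorem concat_eqv_of_chains
    {J : Type u} [Category.{u} J] (F : J ⥤ Cat.{u, u})
    {i j i' j' k k' : J}
    {a : F.obj i} {b : F.obj j} {a' : F.obj i'} {b' : F.obj j'}
    {c : F.obj k} {c' : F.obj k'}
    {E : DecZig F j b j' b'}
    {L : DecZig F i a i' a'} {R : DecZig F k c k' c'}
    {D₁ : DecZig F i a j b} {D₁' : DecZig F i' a' j' b'}
    {D₂ : DecZig F j b k c} {D₂' : DecZig F j' b' k' c'}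
    (ch₁ : DChain F L E D₁ D₁') (ch₂ : DChain F E R D₂ D₂') :
    Eqv F ⟨D₁.comp D₂⟩ ⟨D₁'.comp D₂'⟩ :=
  concat_aux ch₂ ch₁

end ZigZagColimit
end

section
/- Let N be a necklace with beads B₀, …, B_k: its vertex set V_N is a finite linearly ordered set, each bead B_i is an interval in V_N, max B_i = min B_{i+1} for 0 ≤ i < k, V_N = B₀ ∪ … ∪ B_k, and the set of joins is J_N = {min B₀} ∪ {max B_i : 0 ≤ i ≤ k}. For every p ≥ 0, the assignment sending a flag U⁰ ⊆ U¹ ⊆ … ⊆ U^p of subsets of V_N with J_N ⊆ U⁰ to the tuple of flags ((U⁰ ∩ B_i) ⊆ … ⊆ (U^p ∩ B_i))_{i=0,…,k} is a bijection onto the set of (k+1)-tuples of flags (U_i⁰ ⊆ … ⊆ U_i^p) of subsets of B_i satisfying min B_i ∈ U_i⁰ and max B_i ∈ U_i⁰ for each i; its inverse sends a tuple to the flag with U^r = U_0^r ∪ … ∪ U_k^r. -/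
open CategoryTheory Opposite

namespace Necklaces

/-- Bead lengths, extended to `ℕ`. -/
def nn (k : ℕ) (n : Fin (k + 1) → ℕ) (j : ℕ) : ℕ :=
  if h : j < k + 1 then n ⟨j, h⟩ else 0

/-- Partial sums of bead lengths: `off k n i = n₀ + … + n_{i-1}`. -/
def off (k : ℕ) (n : Fin (k + 1) → ℕ) : ℕ → ℕ
  | 0 => 0
  | i + 1 => off k n i + nn k n i

/-- The last vertex index of the necklace `Δ^{n₀} ∨ … ∨ Δ^{n_k}`. -/
def total (k : ℕ) (n : Fin (k + 1) → ℕ) : ℕ := off k n (k + 1)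

theorem off_le_off (k : ℕ) (n : Fin (k + 1) → ℕ) {a b : ℕ} (h : a ≤ b) :
    off k n a ≤ off k n b := by
  induction b with
  | zero => interval_cases a; exact le_rfl
  | succ b ih =>
    rcases Nat.lt_or_ge a (b + 1) with h' | h'
    · exact le_trans (ih (Nat.lt_succ_iff.mp h')) (Nat.le_add_right _ _)
    · have : a = b + 1 := le_antisymm h h'
      subst this; exact le_rfl

theorem nn_eq (k : ℕ) (n : Fin (k + 1) → ℕ) (i : Fin (k + 1)) : nn k n i.1 = n i := by
  simp [nn, i.2]

theorem bead_last_le (k : ℕ) (n : Fin (k + 1) → ℕ) (i : Fin (k + 1)) :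
    off k n i.1 + n i ≤ total k n := by
  have h1 : off k n i.1 + n i = off k n (i.1 + 1) := by
    rw [off, nn_eq]
  rw [h1]
  exact off_le_off k n i.2

/-- `v` lies in the `i`-th bead. -/
def InBead (k : ℕ) (n : Fin (k + 1) → ℕ) (i : Fin (k + 1)) (v : ℕ) : Prop :=
  off k n i.1 ≤ v ∧ v ≤ off k n i.1 + n i

theorem bead_cover_aux (k : ℕ) (n : Fin (k + 1) → ℕ) :
    ∀ (m : ℕ), m ≤ k → ∀ v : ℕ, v ≤ off k n (m + 1) → ∃ i : Fin (k + 1), InBead k n i v := by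
  intro m
  induction m with
  | zero =>
    intro _ v hv
    have h0 : nn k n 0 = n ⟨0, Nat.succ_pos k⟩ := nn_eq k n ⟨0, Nat.succ_pos k⟩
    have h1 : off k n (0 + 1) = off k n 0 + nn k n 0 := rfl
    have h2 : off k n 0 = 0 := rfl
    exact ⟨⟨0, Nat.succ_pos k⟩, by simp only [InBead, Fin.val_mk]; omega, by simp only [Fin.val_mk]; omega⟩
  | succ m ih =>
    intro hm v hv
    rcases Nat.lt_or_ge (off k n (m + 1)) v with h' | h'
    · have hlt : m + 1 < k + 1 := by omega
      have h0 : nn k n (m + 1) = n ⟨m + 1, hlt⟩ := nn_eq k n ⟨m + 1, hlt⟩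
      have h1 : off k n (m + 1 + 1) = off k n (m + 1) + nn k n (m + 1) := rfl
      exact ⟨⟨m + 1, hlt⟩, by simp only [Fin.val_mk]; omega, by simp only [Fin.val_mk]; omega⟩
    · exact ih (by omega) v h'

theorem bead_cover (k : ℕ) (n : Fin (k + 1) → ℕ) (v : ℕ) (hv : v ≤ total k n) :
    ∃ i : Fin (k + 1), InBead k n i v :=
  bead_cover_aux k n k le_rfl v hv

/-- The realization `|N| = Δ^{n₀} ∨ … ∨ Δ^{n_k}` of a necklace, modelled as the simplicial
subset of `Δ^{total}` consisting of those simplices whose vertices all lie in a single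
bead. -/
def NeckSS (k : ℕ) (n : Fin (k + 1) → ℕ) : SSet.{0} where
  obj m := {σ : m.unop ⟶ SimplexCategory.mk (total k n) //
    ∃ i : Fin (k + 1), ∀ x, InBead k n i (σ.toOrderHom x).1}
  map {m m'} θ := TypeCat.ofHom fun σ => ⟨θ.unop ≫ σ.1, by
    obtain ⟨i, hi⟩ := σ.2
    exact ⟨i, fun x => hi _⟩⟩
  map_id := by
    intro m
    ext σ
    rfl
  map_comp := by
    intro m m' m'' θ θ'
    ext σ
    rfl

/-- The vertex `v` of the necklace, as a `0`-simplex of its realization. -/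
def vert (k : ℕ) (n : Fin (k + 1) → ℕ) (v : Fin (total k n + 1)) :
    (NeckSS k n).obj (op (SimplexCategory.mk 0)) :=
  ⟨SimplexCategory.const _ (SimplexCategory.mk (total k n)) v, by
    obtain ⟨i, hi⟩ := bead_cover k n v.1 (Nat.lt_succ_iff.mp v.2)
    exact ⟨i, fun x => by simpa using hi⟩⟩

/-- The inclusion of the `i`-th bead `Δ^{n_i}` into `Δ^{total}`. -/
def beadHom (k : ℕ) (n : Fin (k + 1) → ℕ) (i : Fin (k + 1)) :
    SimplexCategory.mk (n i) ⟶ SimplexCategory.mk (total k n) :=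
  SimplexCategory.mkHom
    ⟨fun x => ⟨off k n i.1 + x.1, by have := bead_last_le k n i; omega⟩,
     fun x y hxy => by simpa using by omega⟩

/-- The `i`-th bead, as an `n_i`-simplex of the realization of the necklace. -/
def beadSimp (k : ℕ) (n : Fin (k + 1) → ℕ) (i : Fin (k + 1)) :
    (NeckSS k n).obj (op (SimplexCategory.mk (n i))) :=
  ⟨beadHom k n i, ⟨i, fun x => by
    constructor
    · exact Nat.le_add_right _ _
    · have : x.1 ≤ n i := Nat.lt_succ_iff.mp x.2
      show off k n i.1 + x.1 ≤ off k n i.1 + n i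
      omega⟩⟩

/-- The vertex of the necklace at position `x` of the `i`-th bead. -/
def vtxIdx (k : ℕ) (n : Fin (k + 1) → ℕ) (i : Fin (k + 1)) (x : Fin (n i + 1)) :
    Fin (total k n + 1) :=
  ⟨off k n i.1 + x.1, by have := bead_last_le k n i; omega⟩

/-- The set of joins of the necklace: the initial vertex of the first bead together with
the final vertices of all beads. -/
def JN (k : ℕ) (n : Fin (k + 1) → ℕ) : Set (Fin (total k n + 1)) :=
  {v | v.1 = 0 ∨ ∃ i : Fin (k + 1), v.1 = off k n i.1 + n i}


/-- The `i`-th bead of the necklace, as a set of vertices (a consecutive interval). -/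
def BeadSet (k : ℕ) (n : Fin (k + 1) → ℕ) (i : Fin (k + 1)) :
    Set (Fin (total k n + 1)) :=
  {v | InBead k n i v.1}

/-- The first vertex of the `i`-th bead. -/
def minB (k : ℕ) (n : Fin (k + 1) → ℕ) (i : Fin (k + 1)) : Fin (total k n + 1) :=
  ⟨off k n i.1, by have := bead_last_le k n i; omega⟩

/-- The last vertex of the `i`-th bead. -/
def maxB (k : ℕ) (n : Fin (k + 1) → ℕ) (i : Fin (k + 1)) : Fin (total k n + 1) :=
  vtxIdx k n i (Fin.last (n i))

theorem off_succ (k : ℕ) (n : Fin (k + 1) → ℕ) (i : Fin (k + 1)) :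
    off k n (i.1 + 1) = off k n i.1 + n i := by
  rw [off, nn_eq]

theorem mem_two_beads (k : ℕ) (n : Fin (k + 1) → ℕ) {i j : Fin (k + 1)}
    (hij : i ≠ j) {v : Fin (total k n + 1)} (hi : v ∈ BeadSet k n i)
    (hj : v ∈ BeadSet k n j) : v = minB k n i ∨ v = maxB k n i := by
  obtain ⟨hi1, hi2⟩ := hi
  obtain ⟨hj1, hj2⟩ := hj
  rcases Nat.lt_or_ge i.1 j.1 with h | h
  · right
    have h1 : off k n (i.1 + 1) ≤ off k n j.1 := off_le_off k n h
    rw [off_succ] at h1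
    exact Fin.ext (by simp only [maxB, vtxIdx, Fin.val_last]; omega)
  · left
    have h' : j.1 < i.1 := lt_of_le_of_ne h (fun e => hij (Fin.ext e.symm))
    have h1 : off k n (j.1 + 1) ≤ off k n i.1 := off_le_off k n h'
    rw [off_succ] at h1
    exact Fin.ext (by simp only [minB]; omega)

/-- **Statement 10.** For a necklace with beads `B₀, …, B_k`: consecutive beads share
exactly their endpoint (`max B_i = min B_{i+1}`), the beads cover the vertex set, and for
every `p ≥ 0`, intersecting with the beads is a bijection from flags
`U⁰ ⊆ … ⊆ U^p` of subsets of `V_N` with `J_N ⊆ U⁰` onto `(k+1)`-tuples of flags of subsets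
of the beads containing the endpoints of their bead, with inverse given by taking unions. -/
theorem flag_restriction_bijection (p k : ℕ) (n : Fin (k + 1) → ℕ) :
    (∀ i : Fin k, maxB k n i.castSucc = minB k n i.succ) ∧
    (∀ v : Fin (total k n + 1), ∃ i : Fin (k + 1), v ∈ BeadSet k n i) ∧
    ∃ e : {U : Fin (p + 1) → Set (Fin (total k n + 1)) // Monotone U ∧ JN k n ⊆ U 0} ≃
        {T : ∀ _ : Fin (k + 1), Fin (p + 1) → Set (Fin (total k n + 1)) //
          ∀ i, Monotone (T i) ∧ (∀ r, T i r ⊆ BeadSet k n i) ∧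
            minB k n i ∈ T i 0 ∧ maxB k n i ∈ T i 0},
      (∀ U, (e U).1 = fun i r => U.1 r ∩ BeadSet k n i) ∧
      (∀ T, (e.symm T).1 = fun r => ⋃ i : Fin (k + 1), T.1 i r) := by
  refine ⟨?_, ?_, ?_⟩
  · intro i
    apply Fin.ext
    show off k n i.castSucc.1 + n i.castSucc = off k n i.succ.1
    have : i.succ.1 = i.castSucc.1 + 1 := rfl
    rw [this, off_succ]
  · intro v
    exact bead_cover k n v.1 (Nat.lt_succ_iff.mp v.2)
  · have minB_mem_JN : ∀ i : Fin (k + 1), minB k n i ∈ JN k n := by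
      intro i
      rcases Nat.eq_zero_or_pos i.1 with h0 | h0
      · left; simp [minB, h0, off]
      · right
        obtain ⟨j, hj⟩ := Nat.exists_eq_add_of_lt h0
        have hjlt : j < k + 1 := by omega
        refine ⟨⟨j, hjlt⟩, ?_⟩
        show off k n i.1 = off k n j + n ⟨j, hjlt⟩
        have : i.1 = j + 1 := by omega
        rw [this, ← off_succ k n ⟨j, hjlt⟩]
    have maxB_mem_JN : ∀ i : Fin (k + 1), maxB k n i ∈ JN k n := by
      intro i
      exact Or.inr ⟨i, rfl⟩
    have minB_mem_Bead : ∀ i : Fin (k + 1), minB k n i ∈ BeadSet k n i := by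
      intro i; exact ⟨le_rfl, Nat.le_add_right _ _⟩
    have maxB_mem_Bead : ∀ i : Fin (k + 1), maxB k n i ∈ BeadSet k n i := by
      intro i; exact ⟨Nat.le_add_right _ _, le_rfl⟩
    refine ⟨⟨fun U => ⟨fun i r => U.1 r ∩ BeadSet k n i, ?_⟩,
            fun T => ⟨fun r => ⋃ i, T.1 i r, ?_, ?_⟩, ?_, ?_⟩, fun U => rfl, fun T => rfl⟩
    · intro i
      refine ⟨fun r s hrs => Set.inter_subset_inter_left _ (U.2.1 hrs), fun r => Set.inter_subset_right,
        ⟨U.2.2 (minB_mem_JN i), minB_mem_Bead i⟩, ⟨U.2.2 (maxB_mem_JN i), maxB_mem_Bead i⟩⟩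
    · intro r s hrs
      exact Set.iUnion_mono fun i => (T.2 i).1 hrs
    · intro v hv
      rcases hv with h0 | ⟨i, hi⟩
      · have : v = minB k n ⟨0, Nat.succ_pos k⟩ := Fin.ext (by simpa [minB, off] using h0)
        rw [this]
        exact Set.mem_iUnion.2 ⟨_, (T.2 _).2.2.1⟩
      · have : v = maxB k n i := Fin.ext hi
        rw [this]
        exact Set.mem_iUnion.2 ⟨i, (T.2 i).2.2.2⟩
    · intro U
      apply Subtype.ext
      funext r
      ext v
      simp only [Set.mem_iUnion, Set.mem_inter_iff]
      constructor
      · rintro ⟨i, hv, _⟩; exact hv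
      · intro hv
        obtain ⟨i, hi⟩ := bead_cover k n v.1 (Nat.lt_succ_iff.mp v.2)
        exact ⟨i, hv, hi⟩
    · intro T
      apply Subtype.ext
      funext i r
      ext v
      simp only [Set.mem_inter_iff, Set.mem_iUnion]
      constructor
      · rintro ⟨⟨j, hj⟩, hvi⟩
        by_cases hij : i = j
        · exact hij ▸ hj
        · have hvj : v ∈ BeadSet k n j := (T.2 j).2.1 r hj
          rcases mem_two_beads k n hij hvi hvj with he | he
          · exact he ▸ (T.2 i).1 (Fin.zero_le r) (T.2 i).2.2.1
          · exact he ▸ (T.2 i).1 (Fin.zero_le r) (T.2 i).2.2.2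
      · intro hv
        exact ⟨⟨i, hv⟩, (T.2 i).2.1 r hv⟩

end Necklaces
end

section
/- Let J be a small category and F : J ⥤ Type. Two elements (i, a) and (j, b) of the disjoint union Σ_{i ∈ J} F(i) have equal images under the canonical maps into the colimit of F if and only if there exists an F-decorated zig-zag connecting them: a zig-zag in J from i to j with left legs l_k : j_k → i_{k−1} and right legs r_k : j_k → i_k (i₀ = i, i_n = j) together with elements a_k ∈ F(j_k) such that F(l₁)(a₁) = a, F(r_k)(a_k) = F(l_{k+1})(a_{k+1}) for 1 ≤ k < n, and F(r_n)(a_n) = b (for n = 0 the condition is i = j and a = b, or more generally equality of the pairs). -/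
open CategoryTheory Limits

universe u

namespace ZigZagType

variable {J : Type u} [Category.{u} J]

/-- `Conn F ⟨i, a⟩ ⟨j, b⟩` holds precisely when there is an `F`-decorated zig-zag connecting
`(i, a)` and `(j, b)`: a zig-zag in `J` from `i` to `j` with left legs `l_k : j_k ⟶ i_{k-1}`
and right legs `r_k : j_k ⟶ i_k`, together with elements `a_k ∈ F(j_k)` with
`F(l₁)(a₁) = a`, `F(r_k)(a_k) = F(l_{k+1})(a_{k+1})` and `F(r_n)(a_n) = b`; for `n = 0` the
condition is equality of the pairs. -/
inductive Conn (F : J ⥤ Type u) : (Σ i : J, F.obj i) → (Σ i : J, F.obj i) → Prop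
  | nil (x : Σ i : J, F.obj i) : Conn F x x
  | cons {i j₁ i₁ : J} (l : j₁ ⟶ i) (r : j₁ ⟶ i₁) (a₁ : F.obj j₁)
      {y : Σ i : J, F.obj i} (h : Conn F ⟨i₁, F.map r a₁⟩ y) : Conn F ⟨i, F.map l a₁⟩ y

theorem Conn.trans {F : J ⥤ Type u} {x y z : Σ i : J, F.obj i}
    (h₁ : Conn F x y) (h₂ : Conn F y z) : Conn F x z := by
  induction h₁ with
  | nil => exact h₂
  | cons l r a₁ h ih => exact Conn.cons l r a₁ (ih h₂)

theorem Conn.single {F : J ⥤ Type u} {i j₁ i₁ : J} (l : j₁ ⟶ i) (r : j₁ ⟶ i₁)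
    (a₁ : F.obj j₁) : Conn F ⟨i, F.map l a₁⟩ ⟨i₁, F.map r a₁⟩ :=
  Conn.cons l r a₁ (Conn.nil _)

theorem Conn.symm {F : J ⥤ Type u} {x y : Σ i : J, F.obj i}
    (h : Conn F x y) : Conn F y x := by
  induction h with
  | nil => exact Conn.nil _
  | cons l r a₁ h ih => exact ih.trans (Conn.single r l a₁)

theorem conn_of_rel {F : J ⥤ Type u} {x y : Σ i : J, F.obj i}
    (h : F.ColimitTypeRel x y) : Conn F x y := by
  obtain ⟨i, a⟩ := x
  obtain ⟨j, b⟩ := y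
  obtain ⟨f, hb⟩ := h
  dsimp at f hb
  rw [hb]
  have := Conn.single (F := F) (𝟙 i) f a
  simpa using this

theorem conn_of_eqvGen {F : J ⥤ Type u} {x y : Σ i : J, F.obj i}
    (h : Relation.EqvGen (F.ColimitTypeRel) x y) : Conn F x y := by
  induction h with
  | rel _ _ h => exact conn_of_rel h
  | refl => exact Conn.nil _
  | symm _ _ _ ih => exact ih.symm
  | trans _ _ _ _ _ ih₁ ih₂ => exact ih₁.trans ih₂

theorem ι_eq_of_conn {J : Type u} [SmallCategory J] {F : J ⥤ Type u}
    {x y : Σ i : J, F.obj i} (h : Conn F x y) :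
    colimit.ι F x.1 x.2 = colimit.ι F y.1 y.2 := by
  induction h with
  | nil => rfl
  | cons l r a₁ h ih =>
    exact (Types.colimit_sound l rfl).symm.trans ((Types.colimit_sound r rfl).trans ih)

/-- **Statement 16.** Two elements `(i, a)` and `(j, b)` of `Σ_{i ∈ J} F(i)` have equal
images under the canonical maps into the colimit of `F : J ⥤ Type` if and only if there is
an `F`-decorated zig-zag connecting them. -/
theorem colimit_ι_eq_iff_decorated_zigzag
    {J : Type u} [SmallCategory J] (F : J ⥤ Type u)
    {i j : J} (a : F.obj i) (b : F.obj j) :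
    colimit.ι F i a = colimit.ι F j b ↔ Conn F ⟨i, a⟩ ⟨j, b⟩ := by
  exact ⟨fun h => conn_of_eqvGen (Types.colimit_eq h), fun h => ι_eq_of_conn h⟩

end ZigZagType
end

section
/- Let J be a small category. For every zig-zag z : i ⇝ j in J, there exists a transposition 2-cell in the double category of iterated zig-zags of J: a finite vertical chain of 2-cells of the zig-zag double category ℤJ whose total horizontal source is z, whose total horizontal target is a constant (identity-decorated) zig-zag at j, whose left vertical boundary is the zig-zag z itself (viewed vertically), and whose right vertical boundary is a constant zig-zag at j. Dually, there exists such a chain with horizontal source a constant zig-zag at i, horizontal target z, left vertical boundary constant at i, and right vertical boundary z. -/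
open CategoryTheory

universe u

namespace ZigZagTranspose

variable {J : Type u} [Category.{u} J]

/-- A zig-zag in `J` from `i` to `j`: a finite string of roofs `i ⟵ j₁ ⟶ i₁ ⟵ … ⟶ j`. -/
inductive Zig (J : Type u) [Category.{u} J] : J → J → Type u
  | nil (i : J) : Zig J i i
  | cons {i j₁ i₁ j : J} (l : j₁ ⟶ i) (r : j₁ ⟶ i₁) (rest : Zig J i₁ j) : Zig J i j

/-- A constant (identity) zig-zag: all legs are identities. -/
inductive Zig.IsConst : ∀ {i j : J}, Zig J i j → Prop
  | nil (i : J) : Zig.IsConst (.nil i)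
  | cons {i j : J} {rest : Zig J i j} (h : Zig.IsConst rest) :
      Zig.IsConst (.cons (𝟙 i) (𝟙 i) rest)

/-- 2-cells of the zig-zag double category `ℤJ`, lying over vertical boundary morphisms
`ρi` and `ρj`; generated by horizontal concatenations of squares (collapsing a roof) and
roof morphisms, i.e. by endpoint-preserving functors of walking zig-zags (monotone
surjections) together with natural transformations. -/
inductive ZCell : ∀ {i j i' j' : J}, (i ⟶ i') → (j ⟶ j') → Zig J i j → Zig J i' j' → Prop
  | nil {i k : J} (ρ : i ⟶ k) : ZCell ρ ρ (.nil i) (.nil k)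
  | squareCons {i i₁ k j₁ j j' : J} (l : j₁ ⟶ i) (r : j₁ ⟶ i₁) (ρi : i ⟶ k) (ρ₁ : i₁ ⟶ k)
      (w : l ≫ ρi = r ≫ ρ₁) {ρj : j ⟶ j'} {rest : Zig J i₁ j} {rest' : Zig J k j'}
      (hc : ZCell ρ₁ ρj rest rest') : ZCell ρi ρj (.cons l r rest) rest'
  | roofCons {i i' i₁ i₁' j₁ j₁' j j' : J} (l : j₁ ⟶ i) (r : j₁ ⟶ i₁)
      (l' : j₁' ⟶ i') (r' : j₁' ⟶ i₁')
      (ρi : i ⟶ i') (ρ₁ : i₁ ⟶ i₁') (ρt : j₁ ⟶ j₁')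
      (wl : l ≫ ρi = ρt ≫ l') (wr : r ≫ ρ₁ = ρt ≫ r')
      {ρj : j ⟶ j'} {rest : Zig J i₁ j} {rest' : Zig J i₁' j'}
      (hc : ZCell ρ₁ ρj rest rest') :
      ZCell ρi ρj (.cons l r rest) (.cons l' r' rest')

/-- A finite vertical chain of 2-cells of `ℤJ` (a 2-cell of the double category `Z̃J` of
iterated zig-zags), recording its two vertical boundary zig-zags. Each step consists of a
middle horizontal zig-zag together with a cell pointing up and a cell pointing down, the
vertical legs assembling into the boundary zig-zags. -/
inductive CellChain :
    ∀ {i i' j j' : J}, Zig J i i' → Zig J j j' → Zig J i j → Zig J i' j' → Prop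
  | nil {i j : J} (z : Zig J i j) : CellChain (.nil i) (.nil j) z z
  | cons {m i i₁ mj j j₁ i' j' : J}
      (l : m ⟶ i) (r : m ⟶ i₁) (lj : mj ⟶ j) (rj : mj ⟶ j₁)
      {zl : Zig J i₁ i'} {zr : Zig J j₁ j'} {ztop : Zig J i j} {zmid : Zig J m mj}
      {znext : Zig J i₁ j₁} {zbot : Zig J i' j'}
      (cup : ZCell l lj zmid ztop) (cdn : ZCell r rj zmid znext)
      (rest : CellChain zl zr znext zbot) :
      CellChain (.cons l r zl) (.cons lj rj zr) ztop zbot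

/-- Concatenation of zig-zags. -/
def Zig.append : ∀ {i a j : J}, Zig J i a → Zig J a j → Zig J i j
  | _, _, _, .nil _, s => s
  | _, _, _, .cons l r rest, s => .cons l r (rest.append s)

theorem Zig.append_nil : ∀ {i a : J} (p : Zig J i a), p.append (.nil a) = p
  | _, _, .nil _ => rfl
  | _, _, .cons l r rest => by simp [Zig.append, Zig.append_nil rest]

theorem Zig.append_assoc : ∀ {i a b j : J} (p : Zig J i a) (q : Zig J a b) (s : Zig J b j),
    (p.append q).append s = p.append (q.append s)
  | _, _, _, _, .nil _, q, s => rfl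
  | _, _, _, _, .cons l r rest, q, s => by
      simp [Zig.append, Zig.append_assoc rest q s]

/-- The identity 2-cell on a zig-zag. -/
theorem ZCell.id : ∀ {i j : J} (z : Zig J i j), ZCell (𝟙 i) (𝟙 j) z z
  | _, _, .nil i => ZCell.nil (𝟙 i)
  | _, _, .cons l r rest =>
      ZCell.roofCons l r l r (𝟙 _) (𝟙 _) (𝟙 _) (by simp) (by simp) (ZCell.id rest)

/-- Extending a 2-cell on the left by an identity cell on a prefix zig-zag. -/
theorem ZCell.appendId : ∀ {i a : J} (p : Zig J i a) {c c' : J} {ρj : c ⟶ c'}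
    {s : Zig J a c} {t : Zig J a c'},
    ZCell (𝟙 a) ρj s t → ZCell (𝟙 i) ρj (p.append s) (p.append t)
  | _, _, .nil _, _, _, _, _, _, h => h
  | _, _, .cons l r rest, _, _, _, _, _, h =>
      ZCell.roofCons l r l r (𝟙 _) (𝟙 _) (𝟙 _) (by simp) (by simp)
        (ZCell.appendId rest h)

/-- Key lemma for the second part: zig-zags can be built up from a constant zig-zag,
one roof at a time, with an accumulated prefix `p`. -/
theorem chain_build : ∀ {a j : J} (s : Zig J a j) {i : J} (p : Zig J i a),
    ∃ zl : Zig J i i, zl.IsConst ∧ CellChain zl s p (p.append s) := by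
  intro a j s
  induction s with
  | nil a =>
      intro i p
      exact ⟨.nil i, .nil i, by rw [Zig.append_nil]; exact CellChain.nil p⟩
  | @cons a j₁ a₁ j l r s' ih =>
      intro i p
      obtain ⟨zl, hconst, C⟩ := ih (p.append (.cons l r (.nil a₁)))
      rw [Zig.append_assoc] at C
      have cell0 : ZCell (𝟙 a) l (.cons l (𝟙 j₁) (.nil j₁)) (.nil a) :=
        ZCell.squareCons l (𝟙 j₁) (𝟙 a) l (by simp) (ZCell.nil l)
      have cell1 : ZCell (𝟙 a) r (.cons l (𝟙 j₁) (.nil j₁)) (.cons l r (.nil a₁)) :=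
        ZCell.roofCons l (𝟙 j₁) l r (𝟙 a) r (𝟙 j₁) (by simp) (by simp) (ZCell.nil r)
      have cup : ZCell (𝟙 i) l (p.append (.cons l (𝟙 j₁) (.nil j₁))) p := by
        have := ZCell.appendId p cell0
        rwa [Zig.append_nil] at this
      have cdn : ZCell (𝟙 i) r (p.append (.cons l (𝟙 j₁) (.nil j₁)))
          (p.append (.cons l r (.nil a₁))) := ZCell.appendId p cell1
      exact ⟨.cons (𝟙 i) (𝟙 i) zl, Zig.IsConst.cons hconst,
        CellChain.cons (𝟙 i) (𝟙 i) l r cup cdn C⟩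

/-- **Statement 17.** For every zig-zag `z : i ⇝ j` in `J` there is a transposition 2-cell
in the double category of iterated zig-zags: a finite vertical chain of 2-cells of `ℤJ`
with total horizontal source `z`, total horizontal target a constant zig-zag at `j`, left
vertical boundary the zig-zag `z` itself, and right vertical boundary a constant zig-zag at
`j`;  and dually a chain with horizontal source a constant zig-zag at `i`, horizontal
target `z`, left vertical boundary constant at `i` and right vertical boundary `z`. -/
theorem exists_transposition_cells {i j : J} (z : Zig J i j) :
    (∃ (zbot : Zig J j j) (zr : Zig J j j),
      zbot.IsConst ∧ zr.IsConst ∧ CellChain z zr z zbot) ∧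
    (∃ (ztop : Zig J i i) (zl : Zig J i i),
      ztop.IsConst ∧ zl.IsConst ∧ CellChain zl z ztop z) := by
  constructor
  · induction z with
    | nil i => exact ⟨.nil i, .nil i, .nil i, .nil i, CellChain.nil (.nil i)⟩
    | @cons i j₁ i₁ j l r rest ih =>
        obtain ⟨zbot, zr, hb, hr, C⟩ := ih
        refine ⟨zbot, .cons (𝟙 j) (𝟙 j) zr, hb, Zig.IsConst.cons hr, ?_⟩
        have cup : ZCell l (𝟙 j) (.cons (𝟙 j₁) r rest) (.cons l r rest) :=
          ZCell.roofCons (𝟙 j₁) r l r l (𝟙 i₁) (𝟙 j₁) (by simp) (by simp) (ZCell.id rest)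
        have cdn : ZCell r (𝟙 j) (.cons (𝟙 j₁) r rest) rest :=
          ZCell.squareCons (𝟙 j₁) r r (𝟙 i₁) (by simp) (ZCell.id rest)
        exact CellChain.cons l r (𝟙 j) (𝟙 j) cup cdn C
  · obtain ⟨zl, hconst, C⟩ := chain_build z (.nil i)
    exact ⟨.nil i, zl, .nil i, hconst, C⟩

end ZigZagTranspose
end
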